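/- Let (M, f) be a unique factorisation n-magma with all arities n i ≥ 1, admitting a norm ν : M → ℕ, and suppose the set M⁰ of irreducible elements of M is nonempty and finite. Then (M, f) is a free n-magma generated by its irreducibles: for every type N, every family of maps g : ∀ i : Fin k, (Fin (n i) → N) → N, and every map φ : M⁰ → N, there exists a unique map θ : M → N such that θ m = φ m for every irreducible m, and θ (f i a) = g i (θ ∘ a) for every index i and every tuple a : Fin (n i) → M. -/
import Mathlib

section Aux

variable {k : ℕ} {n : Fin k → ℕ}
    {M : Type*} (f : ∀ i : Fin k, (Fin (n i) → M) → M) (ν : M → ℕ)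

lemma stmt2_arg_lt (hn : ∀ i, 1 ≤ n i) (hν1 : ∀ m, 1 ≤ ν m)
    (hνu : ∀ (i : Fin k) (a : Fin (n i) → M), n i = 1 → ν (a ⟨0, hn i⟩) < ν (f i a))
    (hνs : ∀ (i : Fin k) (a : Fin (n i) → M), 2 ≤ n i → ∑ j, ν (a j) ≤ ν (f i a))
    (i : Fin k) (a : Fin (n i) → M) (j : Fin (n i)) : ν (a j) < ν (f i a) := by
  rcases eq_or_lt_of_le (hn i) with h1 | h2
  · have hj : j = ⟨0, hn i⟩ := by
      ext; omega
    rw [hj]; exact hνu i a h1.symm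
  · have hlt : ν (a j) < ∑ j', ν (a j') := by
      obtain ⟨j', -, hj'⟩ := Finset.exists_mem_ne
        (s := (Finset.univ : Finset (Fin (n i)))) (by simpa using h2) j
      exact Finset.single_lt_sum (f := fun j'' => ν (a j'')) hj' (Finset.mem_univ j)
        (Finset.mem_univ j') (hν1 (a j')) (fun _ _ _ => Nat.zero_le _)
    exact lt_of_lt_of_le hlt (hνs i a h2)

variable {N : Type*} (g : ∀ i : Fin k, (Fin (n i) → N) → N)
    (φ : {m : M | ∀ (i : Fin k) (a : Fin (n i) → M), f i a ≠ m} → N)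
    (harg : ∀ (i : Fin k) (a : Fin (n i) → M) (j : Fin (n i)), ν (a j) < ν (f i a))

attribute [local instance] Classical.propDecidable

noncomputable def stmt2_theta : M → N :=
  WellFounded.fix (InvImage.wf ν Nat.lt_wfRel.wf) fun m IH =>
    if h : ∃ i, ∃ a : Fin (n i) → M, f i a = m then
      g h.choose fun j => IH (h.choose_spec.choose j)
        (lt_of_lt_of_eq (harg _ _ j) (congrArg ν h.choose_spec.choose_spec))
    else φ ⟨m, fun i a hia => h ⟨i, a, hia⟩⟩

lemma stmt2_theta_eq (m : M) :
    stmt2_theta f ν g φ harg m =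
      if h : ∃ i, ∃ a : Fin (n i) → M, f i a = m then
        g h.choose fun j => stmt2_theta f ν g φ harg (h.choose_spec.choose j)
      else φ ⟨m, fun i a hia => h ⟨i, a, hia⟩⟩ := by
  rw [stmt2_theta, WellFounded.fix_eq]

lemma stmt2_theta_irred (m : M) (hm : ∀ (i : Fin k) (a : Fin (n i) → M), f i a ≠ m) :
    stmt2_theta f ν g φ harg m = φ ⟨m, hm⟩ := by
  rw [stmt2_theta_eq, dif_neg (fun ⟨i, a, hia⟩ => hm i a hia)]

lemma stmt2_theta_red (hinj : ∀ i, Function.Injective (f i))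
    (hdisj : ∀ i j, i ≠ j → ∀ (a : Fin (n i) → M) (b : Fin (n j) → M), f i a ≠ f j b)
    (i : Fin k) (a : Fin (n i) → M) :
    stmt2_theta f ν g φ harg (f i a) =
      g i fun j => stmt2_theta f ν g φ harg (a j) := by
  rw [stmt2_theta_eq]
  have h : ∃ i', ∃ a' : Fin (n i') → M, f i' a' = f i a := ⟨i, a, rfl⟩
  rw [dif_pos h]
  have key : ∀ (i' : Fin k) (a' : Fin (n i') → M), f i' a' = f i a →
      (g i' fun j => stmt2_theta f ν g φ harg (a' j)) =
        g i fun j => stmt2_theta f ν g φ harg (a j) := by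
    intro i' a' he
    have hii : i' = i := by
      by_contra hne'
      exact hdisj _ _ hne' _ _ he
    subst hii
    rw [hinj _ he]
  exact key _ _ h.choose_spec.choose_spec

end Aux

/-- A unique factorisation normed `n`-magma with a nonempty finite set of
irreducibles is a free `n`-magma generated by its irreducibles. -/
theorem stmt2 {k : ℕ} (n : Fin k → ℕ) (hn : ∀ i, 1 ≤ n i)
    {M : Type*}
    (f : ∀ i : Fin k, (Fin (n i) → M) → M)
    (hinj : ∀ i, Function.Injective (f i))
    (hdisj : ∀ i j, i ≠ j → ∀ (a : Fin (n i) → M) (b : Fin (n j) → M), f i a ≠ f j b)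
    (ν : M → ℕ)
    (hν1 : ∀ m, 1 ≤ ν m)
    (hνu : ∀ (i : Fin k) (a : Fin (n i) → M), n i = 1 → ν (a ⟨0, hn i⟩) < ν (f i a))
    (hνs : ∀ (i : Fin k) (a : Fin (n i) → M), 2 ≤ n i → ∑ j, ν (a j) ≤ ν (f i a))
    (hne : ∃ m : M, ∀ (i : Fin k) (a : Fin (n i) → M), f i a ≠ m)
    (hfin : {m : M | ∀ (i : Fin k) (a : Fin (n i) → M), f i a ≠ m}.Finite)
    (N : Type*) (g : ∀ i : Fin k, (Fin (n i) → N) → N)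
    (φ : {m : M | ∀ (i : Fin k) (a : Fin (n i) → M), f i a ≠ m} → N) :
    ∃! θ : M → N,
      (∀ m : {m : M | ∀ (i : Fin k) (a : Fin (n i) → M), f i a ≠ m}, θ m = φ m) ∧
      (∀ (i : Fin k) (a : Fin (n i) → M), θ (f i a) = g i (θ ∘ a)) := by
  have harg := stmt2_arg_lt f ν hn hν1 hνu hνs
  set θ := stmt2_theta f ν g φ harg with hθ
  refine ⟨θ, ⟨?_, ?_⟩, ?_⟩
  · rintro ⟨m, hm⟩
    exact stmt2_theta_irred f ν g φ harg m hm
  · intro i a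
    exact stmt2_theta_red f ν g φ harg hinj hdisj i a
  · intro θ' ⟨h0, h1⟩
    funext m
    have key : ∀ v, ∀ m : M, ν m = v → θ' m = θ m := by
      intro v
      induction v using Nat.strong_induction_on with
      | _ v IH =>
        rintro m rfl
        by_cases h : ∃ i, ∃ a : Fin (n i) → M, f i a = m
        · obtain ⟨i, a, rfl⟩ := h
          rw [h1 i a, hθ, stmt2_theta_red f ν g φ harg hinj hdisj i a]
          congr 1
          funext j
          exact IH (ν (a j)) (harg i a j) (a j) rfl
        · push_neg at h
          rw [h0 ⟨m, h⟩, hθ, stmt2_theta_irred f ν g φ harg m h]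
    exact key (ν m) m rfl
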